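/- For every integer n ≥ 1, the mean of the number of flaws over all ordered preference sets of length n equals 2^{2n−1}/C(2n,n) − 1, and the variance of the number of flaws equals n − (2^{2n−1}/C(2n,n))²; equivalently, with op_{n,k} the number of ordered preference sets of length n with exactly k flaws, one has 2·Σ_{k=0}^{n−1} op_{n,k} = C(2n,n), 2·Σ_{k=0}^{n−1} k·op_{n,k} = 2^{2n−1} − C(2n,n), and 2·Σ_{k=0}^{n−1} k(k−1)·op_{n,k} = (n+2)·C(2n,n) − 3·2^{2n−1}. -/

import Mathlib

/-- The first unoccupied parking space `j` with `p ≤ j ≤ n`, if any. -/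
def firstFree (n : ℕ) (occ : Finset ℕ) (p : ℕ) : Option ℕ :=
  (List.range' p (n + 1 - p)).find? (fun j => decide (j ∉ occ))

/-- Number of cars that fail to park, processing the preference list in order,
given the set of already occupied spaces. -/
def flawsFrom (n : ℕ) : List ℕ → Finset ℕ → ℕ
  | [], _ => 0
  | p :: rest, occ =>
    match firstFree n occ p with
    | none => flawsFrom n rest occ + 1
    | some j => flawsFrom n rest (insert j occ)

/-- The number of flaws (unparked cars) of a preference list of length `n`. -/
def flaws (n : ℕ) (a : List ℕ) : ℕ := flawsFrom n a ∅

/-- A preference set of length `n`: a list of length `n` with entries in `{1, …, n}`. -/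
def IsPrefSet (n : ℕ) (a : List ℕ) : Prop :=
  a.length = n ∧ ∀ x ∈ a, 1 ≤ x ∧ x ≤ n

/-- An ordered preference set of length `n`: a nondecreasing preference set. -/
def IsOrderedPrefSet (n : ℕ) (a : List ℕ) : Prop :=
  IsPrefSet n a ∧ a.Pairwise (· ≤ ·)

/-- `op_{n,≥k}`: number of ordered preference sets of length `n` with at least `k` flaws. -/
noncomputable def opGe (n k : ℕ) : ℕ :=
  {a : List ℕ | IsOrderedPrefSet n a ∧ k ≤ flaws n a}.ncard

/-- `op_{n,≤k}`: number of ordered preference sets of length `n` with at most `k` flaws. -/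
noncomputable def opLe (n k : ℕ) : ℕ :=
  {a : List ℕ | IsOrderedPrefSet n a ∧ flaws n a ≤ k}.ncard

/-- `op_{n,k}`: number of ordered preference sets of length `n` with exactly `k` flaws. -/
noncomputable def opEq (n k : ℕ) : ℕ :=
  {a : List ℕ | IsOrderedPrefSet n a ∧ flaws n a = k}.ncard

/-- `op_{n,≥k,≤l}`: at least `k` flaws, every entry at most `l`. -/
noncomputable def opGeLe (n k l : ℕ) : ℕ :=
  {a : List ℕ | IsOrderedPrefSet n a ∧ k ≤ flaws n a ∧ ∀ x ∈ a, x ≤ l}.ncard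

/-- `op_{n,≥k,≤l}^m`: at least `k` flaws, every entry at most `l`, leading term `m`. -/
noncomputable def opGeLeLead (n k l m : ℕ) : ℕ :=
  {a : List ℕ | IsOrderedPrefSet n a ∧ k ≤ flaws n a ∧ (∀ x ∈ a, x ≤ l) ∧
    a.head? = some m}.ncard

/-- `op_{n,k,≤l}^m`: exactly `k` flaws, every entry at most `l`, leading term `m`. -/
noncomputable def opEqLeLead (n k l m : ℕ) : ℕ :=
  {a : List ℕ | IsOrderedPrefSet n a ∧ flaws n a = k ∧ (∀ x ∈ a, x ≤ l) ∧
    a.head? = some m}.ncard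

/-- `op_{n,k}^m`: exactly `k` flaws, leading term `m`. -/
noncomputable def opLead (n k m : ℕ) : ℕ :=
  {a : List ℕ | IsOrderedPrefSet n a ∧ flaws n a = k ∧ a.head? = some m}.ncard

/-- `op_{n,k,=l}^m`: exactly `k` flaws, maximal entry exactly `l`, leading term `m`. -/
noncomputable def opMaxLead (n k l m : ℕ) : ℕ :=
  {a : List ℕ | IsOrderedPrefSet n a ∧ flaws n a = k ∧ (∀ x ∈ a, x ≤ l) ∧ l ∈ a ∧
    a.head? = some m}.ncard

/-- Binomial coefficient `C(a, b)` with an integer lower index, which is `0`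
when `b < 0` (the standard convention). -/
def chooseInt (a : ℕ) (b : ℤ) : ℕ := if 0 ≤ b then a.choose b.toNat else 0

/-- simplified count for sorted lists, with "frontier" f -/
def simpleCount (n : ℕ) : List ℕ → ℕ → ℕ
  | [], _ => 0
  | p :: r, f => if max p f ≤ n then simpleCount n r (max p f + 1) else simpleCount n r f + 1

lemma find_free (occ : Finset ℕ) (f : ℕ) : ∀ (cnt p : ℕ),
    (∀ i, p ≤ i → (i ∈ occ ↔ i < f)) →
    (List.range' p cnt).find? (fun j => decide (j ∉ occ)) =
      if max p f < p + cnt then some (max p f) else none := by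
  intro cnt
  induction cnt with
  | zero => intro p h; simp
  | succ c ih =>
    intro p h
    rw [List.range'_succ, List.find?_cons]
    by_cases hp : p ∈ occ
    · have hpf : p < f := (h p le_rfl).1 hp
      have hd : (decide (p ∉ occ)) = false := by simp [hp]
      rw [hd]
      show List.find? (fun j => decide (j ∉ occ)) (List.range' (p+1) c) = _
      rw [ih (p+1) (fun i hi => h i (by omega))]
      have h1 : max (p+1) f = max p f := by omega
      have h2 : (p + 1 + c) = p + (c+1) := by omega
      rw [h1, h2]
    · have hpf : ¬ (p < f) := fun hlt => hp ((h p le_rfl).2 hlt)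
      have hd : (decide (p ∉ occ)) = true := by simp [hp]
      rw [hd]
      show some p = _
      have : max p f = p := by omega
      rw [this, if_pos (by omega)]

lemma firstFree_eq (n : ℕ) (occ : Finset ℕ) (f p : ℕ) (hp : p ≤ n)
    (h : ∀ i, p ≤ i → (i ∈ occ ↔ i < f)) :
    firstFree n occ p = if max p f ≤ n then some (max p f) else none := by
  rw [firstFree, find_free occ f (n + 1 - p) p h]
  have : p + (n + 1 - p) = n + 1 := by omega
  rw [this]
  congr 1
  simp only [eq_iff_iff]
  omega

lemma flawsFrom_eq_simpleCount (n : ℕ) : ∀ (a : List ℕ) (occ : Finset ℕ) (f : ℕ),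
    a.Pairwise (· ≤ ·) → (∀ p ∈ a, p ≤ n) →
    (∀ j ∈ a, ∀ i, j ≤ i → (i ∈ occ ↔ i < f)) →
    flawsFrom n a occ = simpleCount n a f := by
  intro a
  induction a with
  | nil => intro occ f _ _ _; rfl
  | cons p r ih =>
    intro occ f hs hb hinv
    have hp : p ≤ n := hb p (List.mem_cons_self)
    have hinvp : ∀ i, p ≤ i → (i ∈ occ ↔ i < f) :=
      hinv p (List.mem_cons_self)
    have hsr : r.Pairwise (· ≤ ·) := hs.of_cons
    have hpr : ∀ q ∈ r, p ≤ q := fun q hq => (List.pairwise_cons.1 hs).1 q hq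
    have hff := firstFree_eq n occ f p hp hinvp
    by_cases hm : max p f ≤ n
    · rw [if_pos hm] at hff
      have : flawsFrom n (p :: r) occ = flawsFrom n r (insert (max p f) occ) := by
        rw [flawsFrom, hff]
      rw [this, simpleCount, if_pos hm]
      apply ih _ _ hsr (fun q hq => hb q (List.mem_cons_of_mem p hq))
      intro q hq i hqi
      have hpq : p ≤ q := hpr q hq
      simp only [Finset.mem_insert]
      constructor
      · rintro (rfl | hio)
        · omega
        · have := (hinvp i (by omega)).1 hio; omega
      · intro hi
        by_cases hif : i < f
        · exact Or.inr ((hinvp i (by omega)).2 hif)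
        · left; omega
    · rw [if_neg hm] at hff
      have : flawsFrom n (p :: r) occ = flawsFrom n r occ + 1 := by
        rw [flawsFrom, hff]
      rw [this, simpleCount, if_neg hm]
      congr 1
      rw [ih _ _ hsr (fun q hq => hb q (List.mem_cons_of_mem p hq))]
      intro q hq i hqi
      have hpq := hpr q hq
      exact hinvp i (by omega)

lemma flaws_eq_simpleCount (n : ℕ) (a : List ℕ) (hs : a.Pairwise (· ≤ ·))
    (hb : ∀ p ∈ a, p ≤ n) : flaws n a = simpleCount n a 0 := by
  apply flawsFrom_eq_simpleCount n a ∅ 0 hs hb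
  intro j _ i _
  simp

/-- positional bound: `l.get j ≤ s + j`. -/
def PosB (s : ℕ) : List ℕ → Prop
  | [] => True
  | p :: r => p ≤ s ∧ PosB (s + 1) r

lemma simpleCount_big (n : ℕ) : ∀ (l : List ℕ) (f : ℕ), n < f →
    simpleCount n l f = l.length := by
  intro l
  induction l with
  | nil => intro f _; rfl
  | cons p r ih =>
    intro f hf
    rw [simpleCount, if_neg (by omega), ih f hf, List.length_cons]

lemma simpleCount_le_length (n : ℕ) : ∀ (l : List ℕ) (f : ℕ),
    simpleCount n l f ≤ l.length := by
  intro l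
  induction l with
  | nil => intro f; simp [simpleCount]
  | cons p r ih =>
    intro f
    rw [simpleCount, List.length_cons]
    split
    · exact le_trans (ih _) (by omega)
    · exact Nat.add_le_add_right (ih f) 1

lemma posB_of_big (n : ℕ) : ∀ (l : List ℕ) (s : ℕ), (∀ x ∈ l, x ≤ n) → n ≤ s →
    PosB s l := by
  intro l
  induction l with
  | nil => intro s _ _; trivial
  | cons p r ih =>
    intro s hb hs
    exact ⟨le_trans (hb p (List.mem_cons_self)) hs,
      ih (s+1) (fun x hx => hb x (List.mem_cons_of_mem p hx)) (by omega)⟩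

lemma simpleCount_le_iff (n : ℕ) : ∀ (l : List ℕ) (f c s : ℕ),
    (∀ x ∈ l, x ≤ n) → f ≤ n + 1 → s + l.length = n + 1 + c →
    (simpleCount n l f ≤ c ↔ (PosB s l ∧ f ≤ s)) := by
  intro l
  induction l with
  | nil =>
    intro f c s _ hf hs
    simp only [simpleCount, List.length_nil, Nat.zero_le, true_iff, PosB]
    exact ⟨trivial, by simp only [List.length_nil] at hs; omega⟩
  | cons p r ih =>
    intro f c s hb hf hs
    have hp : p ≤ n := hb p (List.mem_cons_self)
    have hbr : ∀ x ∈ r, x ≤ n := fun x hx => hb x (List.mem_cons_of_mem p hx)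
    rw [simpleCount, List.length_cons] at *
    by_cases hm : max p f ≤ n
    · rw [if_pos hm]
      rw [ih (max p f + 1) c (s+1) hbr (by omega) (by omega)]
      show _ ↔ (p ≤ s ∧ PosB (s+1) r) ∧ f ≤ s
      constructor
      · rintro ⟨h1, h2⟩; exact ⟨⟨by omega, h1⟩, by omega⟩
      · rintro ⟨⟨h1, h2⟩, h3⟩; exact ⟨h2, by omega⟩
    · rw [if_neg hm]
      have hfn : f = n + 1 := by omega
      rw [simpleCount_big n r f (by omega)]
      constructor
      · intro h
        have hsn : n + 1 ≤ s := by omega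
        refine ⟨⟨by omega, posB_of_big n r (s+1) hbr (by omega)⟩, by omega⟩
      · rintro ⟨⟨h1, h2⟩, h3⟩
        omega

/-- decreasing lists of length `i`, entries in `[1, v]`, with `m`-th entry `≤ i - m + k`. -/
def listsD (k : ℕ) : ℕ → ℕ → Finset (List ℕ)
  | 0, _ => {[]}
  | (i+1), v => (Finset.Icc 1 (min v (i+1+k))).biUnion
      (fun p => (listsD k i p).image (fun b => p :: b))

lemma listsD_cap (k : ℕ) : ∀ i v, i + k ≤ v → listsD k i v = listsD k i (i + k) := by
  intro i
  cases i with
  | zero => intro v _; rfl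
  | succ i =>
    intro v hv
    show Finset.biUnion _ _ = Finset.biUnion _ _
    have h1 : min v (i+1+k) = i + 1 + k := by omega
    have h2 : min (i+1+k) (i+1+k) = i + 1 + k := by omega
    rw [h1, h2]

lemma Icc_succ_insert (v : ℕ) : Finset.Icc 1 (v+1) = insert (v+1) (Finset.Icc 1 v) := by
  ext x; simp only [Finset.mem_Icc, Finset.mem_insert]; omega

lemma listsD_card_rec (k i v : ℕ) (hv : v + 1 ≤ i + 1 + k) :
    (listsD k (i+1) (v+1)).card = (listsD k (i+1) v).card + (listsD k i (v+1)).card := by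
  show (Finset.biUnion _ _).card = (Finset.biUnion _ _).card + _
  have h1 : min (v+1) (i+1+k) = v + 1 := by omega
  have h2 : min v (i+1+k) = v := by omega
  rw [h1, h2, Icc_succ_insert, Finset.biUnion_insert]
  rw [Finset.card_union_of_disjoint, Finset.card_image_of_injective _ List.cons_injective,
    Nat.add_comm]
  rw [Finset.disjoint_left]
  rintro l hl hl'
  obtain ⟨b, _, rfl⟩ := Finset.mem_image.1 hl
  obtain ⟨p, hp, hpl⟩ := Finset.mem_biUnion.1 hl'
  obtain ⟨b', _, h⟩ := Finset.mem_image.1 hpl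
  have : p = v + 1 := (List.cons_eq_cons.mp h).1
  simp only [Finset.mem_Icc] at hp
  omega

lemma listsD_zero_right (k i : ℕ) (hi : 0 < i) : (listsD k i 0).card = 0 := by
  obtain ⟨j, rfl⟩ : ∃ j, i = j + 1 := ⟨i - 1, by omega⟩
  show (Finset.biUnion _ _).card = 0
  have : min 0 (j+1+k) = 0 := by omega
  rw [this]
  simp [Finset.Icc_eq_empty_of_lt]

lemma card_listsD (k : ℕ) : ∀ i v, v ≤ i + k + 1 →
    (listsD k i v).card + (i + v - 1).choose (i + k + 1) = (i + v - 1).choose i := by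
  intro i
  induction i with
  | zero =>
    intro v hv
    show ({[]} : Finset (List ℕ)).card + _ = _
    rw [Finset.card_singleton, Nat.choose_eq_zero_of_lt (by omega), Nat.choose_zero_right]
  | succ i ih =>
    intro v
    induction v with
    | zero =>
      intro _
      rw [listsD_zero_right k (i+1) (by omega)]
      have h1 : i + 1 + 0 - 1 = i := by omega
      rw [h1, Nat.choose_eq_zero_of_lt (by omega), Nat.choose_eq_zero_of_lt (by omega)]
    | succ v ihv =>
      intro hv
      have harg : i + 1 + (v + 1) - 1 = (i + v) + 1 := by omega
      rw [harg]
      by_cases hcase : v + 1 ≤ i + 1 + k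
      · -- main case
        rw [listsD_card_rec k i v hcase]
        have H1 := ihv (by omega)
        have H2 := ih (v+1) (by omega)
        have e1 : i + 1 + v - 1 = i + v := by omega
        have e2 : i + (v+1) - 1 = i + v := by omega
        have e4 : i + 1 + k + 1 = i + k + 1 + 1 := by omega
        rw [e1, e4] at H1; rw [e2] at H2
        have p1 : ((i+v)+1).choose ((i+k+1)+1) = (i+v).choose (i+k+1) + (i+v).choose ((i+k+1)+1) :=
          Nat.choose_succ_succ _ _
        have p2 : ((i+v)+1).choose (i+1) = (i+v).choose i + (i+v).choose (i+1) :=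
          Nat.choose_succ_succ _ _
        have e3 : i + 1 + k + 1 = (i+k+1)+1 := by omega
        rw [e3, p1, p2]
        omega
      · -- cap case: v = i + k + 1
        have hv1 : v = i + k + 1 := by omega
        have hcap : listsD k (i+1) (v+1) = listsD k (i+1) v := by
          rw [listsD_cap k (i+1) (v+1) (by omega), listsD_cap k (i+1) v (by omega)]
        rw [hcap]
        have H1 := ihv (by omega)
        have e1 : i + 1 + v - 1 = i + v := by omega
        have e4 : i + 1 + k + 1 = i + k + 1 + 1 := by omega
        rw [e1, e4] at H1
        have p1 : ((i+v)+1).choose ((i+k+1)+1) = (i+v).choose (i+k+1) + (i+v).choose ((i+k+1)+1) :=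
          Nat.choose_succ_succ _ _
        have p2 : ((i+v)+1).choose (i+1) = (i+v).choose i + (i+v).choose (i+1) :=
          Nat.choose_succ_succ _ _
        have e3 : i + 1 + k + 1 = (i+k+1)+1 := by omega
        have hsymm : (i+v).choose (i+k+1) = (i+v).choose i := by
          have : i + v - i = i + k + 1 := by omega
          calc (i+v).choose (i+k+1) = (i+v).choose (i + v - i) := by rw [this]
            _ = (i+v).choose i := Nat.choose_symm (by omega)
        rw [e3, p1, p2]
        omega

lemma posB_append : ∀ (l : List ℕ) (s q : ℕ),
    PosB s (l ++ [q]) ↔ PosB s l ∧ q ≤ s + l.length := by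
  intro l
  induction l with
  | nil => intro s q; show (q ≤ s ∧ True) ↔ _; simp [PosB]
  | cons p r ih =>
    intro s q
    show (p ≤ s ∧ PosB (s+1) (r ++ [q])) ↔ (p ≤ s ∧ PosB (s+1) r) ∧ _
    rw [ih (s+1) q, List.length_cons]
    constructor
    · rintro ⟨h1, h2, h3⟩; exact ⟨⟨h1, h2⟩, by omega⟩
    · rintro ⟨⟨h1, h2⟩, h3⟩; exact ⟨h1, h2, by omega⟩

lemma mem_listsD (k : ℕ) : ∀ i v b, b ∈ listsD k i v ↔
    (b.length = i ∧ (∀ x ∈ b, 1 ≤ x ∧ x ≤ v) ∧ b.reverse.Pairwise (· ≤ ·) ∧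
      PosB (k+1) b.reverse) := by
  intro i
  induction i with
  | zero =>
    intro v b
    show b ∈ ({[]} : Finset (List ℕ)) ↔ _
    rw [Finset.mem_singleton]
    constructor
    · rintro rfl
      exact ⟨rfl, by simp, by simp, trivial⟩
    · rintro ⟨hl, -, -, -⟩
      exact List.length_eq_zero_iff.1 hl
  | succ i ih =>
    intro v b
    show b ∈ Finset.biUnion _ _ ↔ _
    rw [Finset.mem_biUnion]
    constructor
    · rintro ⟨p, hp, hb⟩
      rw [Finset.mem_Icc] at hp
      obtain ⟨b', hb', rfl⟩ := Finset.mem_image.1 hb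
      obtain ⟨hlen, hent, hsort, hpos⟩ := (ih p b').1 hb'
      refine ⟨by simp [hlen], ?_, ?_, ?_⟩
      · intro x hx
        rcases List.mem_cons.1 hx with rfl | hx
        · omega
        · have := hent x hx; omega
      · rw [List.reverse_cons]
        rw [List.pairwise_append]
        refine ⟨hsort, List.pairwise_singleton _ _, ?_⟩
        intro a ha c hc
        rw [List.mem_singleton] at hc
        subst hc
        exact (hent a (List.mem_reverse.1 ha)).2
      · rw [List.reverse_cons, posB_append]
        refine ⟨hpos, ?_⟩
        rw [List.length_reverse, hlen]
        omega
    · rintro ⟨hlen, hent, hsort, hpos⟩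
      obtain ⟨p, b', rfl⟩ : ∃ p b', b = p :: b' := by
        cases b with
        | nil => simp at hlen
        | cons p b' => exact ⟨p, b', rfl⟩
      rw [List.reverse_cons] at hsort hpos
      rw [List.pairwise_append] at hsort
      obtain ⟨hsort', -, hle⟩ := hsort
      rw [posB_append] at hpos
      obtain ⟨hpos', hple⟩ := hpos
      have hlen' : b'.length = i := by simpa using hlen
      have hp1 := hent p (List.mem_cons_self)
      refine ⟨p, ?_, ?_⟩
      · rw [Finset.mem_Icc]
        rw [List.length_reverse, hlen'] at hple
        constructor
        · exact hp1.1
        · have : p ≤ v := hp1.2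
          omega
      · rw [Finset.mem_image]
        refine ⟨b', ?_, rfl⟩
        rw [ih p b']
        refine ⟨hlen', ?_, hsort', hpos'⟩
        intro x hx
        refine ⟨(hent x (List.mem_cons_of_mem p hx)).1, ?_⟩
        exact hle x (List.mem_reverse.2 hx) p (List.mem_singleton_self p)

/-- flaws of an ordered preference set, bounded characterization -/
lemma flaws_le_iff (n : ℕ) (a : List ℕ) (h : IsOrderedPrefSet n a) (c : ℕ) :
    flaws n a ≤ c ↔ PosB (c+1) a := by
  obtain ⟨⟨hlen, hent⟩, hsort⟩ := h
  rw [flaws_eq_simpleCount n a hsort (fun p hp => (hent p hp).2)]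
  rw [simpleCount_le_iff n a 0 c (c+1) (fun p hp => (hent p hp).2) (by omega) (by omega)]
  simp [hlen]

lemma flaws_lt (n : ℕ) (hn : 1 ≤ n) (a : List ℕ) (h : IsOrderedPrefSet n a) :
    flaws n a < n := by
  obtain ⟨⟨hlen, hent⟩, hsort⟩ := h
  rw [flaws_eq_simpleCount n a hsort (fun p hp => (hent p hp).2)]
  cases a with
  | nil => simp at hlen; omega
  | cons p r =>
    rw [simpleCount]
    have hp := hent p (List.mem_cons_self)
    rw [if_pos (by omega)]
    have := simpleCount_le_length n r (max p 0 + 1)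
    simp at hlen
    omega

/-- the Finset of ordered pref sets with flaws ≤ k -/
lemma opLe_set_eq (n k : ℕ) :
    {a : List ℕ | IsOrderedPrefSet n a ∧ flaws n a ≤ k}
      = ↑((listsD k n n).image List.reverse) := by
  ext a
  simp only [Set.mem_setOf_eq, Finset.coe_image, Set.mem_image, Finset.mem_coe]
  constructor
  · rintro ⟨h, hf⟩
    refine ⟨a.reverse, ?_, List.reverse_reverse a⟩
    rw [mem_listsD]
    obtain ⟨⟨hlen, hent⟩, hsort⟩ := h
    refine ⟨by simp [hlen], ?_, by simpa using hsort, ?_⟩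
    · intro x hx; exact hent x (List.mem_reverse.1 hx)
    · rw [List.reverse_reverse]
      exact (flaws_le_iff n a ⟨⟨hlen, hent⟩, hsort⟩ k).1 hf
  · rintro ⟨b, hb, rfl⟩
    rw [mem_listsD] at hb
    obtain ⟨hlen, hent, hsort, hpos⟩ := hb
    have hops : IsOrderedPrefSet n b.reverse := by
      refine ⟨⟨by simp [hlen], ?_⟩, hsort⟩
      intro x hx; exact hent x (List.mem_reverse.1 hx)
    exact ⟨hops, (flaws_le_iff n b.reverse hops k).2 hpos⟩

lemma card_opLe (n k : ℕ) (hn : 1 ≤ n) :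
    ((listsD k n n).image List.reverse).card + (n + n - 1).choose (n + k + 1)
      = (n + n - 1).choose n := by
  rw [Finset.card_image_of_injective _ List.reverse_injective]
  exact card_listsD k n n (by omega)

lemma opEq_card (n : ℕ) (hn : 1 ≤ n) (k : ℕ) :
    opEq n k = (((listsD (n-1) n n).image List.reverse).filter
      (fun a => flaws n a = k)).card := by
  rw [opEq, ← Set.ncard_coe_finset]
  congr 1
  ext a
  simp only [Set.mem_setOf_eq, Finset.coe_filter, Finset.mem_coe]
  have hmem : a ∈ (listsD (n-1) n n).image List.reverse ↔
      (IsOrderedPrefSet n a ∧ flaws n a ≤ n - 1) := by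
    have := Set.ext_iff.1 (opLe_set_eq n (n-1)) a
    simpa using this.symm
  rw [hmem]
  constructor
  · rintro ⟨h, hf⟩
    have := flaws_lt n hn a h
    exact ⟨⟨h, by omega⟩, hf⟩
  · rintro ⟨⟨h, _⟩, hf⟩
    exact ⟨h, hf⟩

lemma filter_flaws_le (n : ℕ) (hn : 1 ≤ n) (k : ℕ) :
    ((listsD (n-1) n n).image List.reverse).filter (fun a => flaws n a ≤ k)
      = (listsD k n n).image List.reverse := by
  ext a
  simp only [Finset.mem_filter]
  have hm1 : a ∈ (listsD (n-1) n n).image List.reverse ↔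
      (IsOrderedPrefSet n a ∧ flaws n a ≤ n - 1) := by
    have := Set.ext_iff.1 (opLe_set_eq n (n-1)) a
    simpa using this.symm
  have hm2 : a ∈ (listsD k n n).image List.reverse ↔
      (IsOrderedPrefSet n a ∧ flaws n a ≤ k) := by
    have := Set.ext_iff.1 (opLe_set_eq n k) a
    simpa using this.symm
  rw [hm1, hm2]
  constructor
  · rintro ⟨⟨h, _⟩, hf⟩; exact ⟨h, hf⟩
  · rintro ⟨h, hf⟩
    have := flaws_lt n hn a h
    exact ⟨⟨h, by omega⟩, hf⟩

lemma opEq_add_choose (n : ℕ) (hn : 1 ≤ n) (k : ℕ) :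
    opEq n k + (n + n - 1).choose (n + (k+1)) = (n + n - 1).choose (n + k) := by
  set U := (listsD (n-1) n n).image List.reverse with hU
  have key : ∀ j, (U.filter (fun a => flaws n a ≤ j)).card + (n+n-1).choose (n+j+1)
      = (n+n-1).choose n := by
    intro j
    rw [filter_flaws_le n hn j]
    exact card_opLe n j hn
  cases k with
  | zero =>
    have h0 : U.filter (fun a => flaws n a = 0) = U.filter (fun a => flaws n a ≤ 0) := by
      apply Finset.filter_congr
      intro a _
      simp [Nat.le_zero]
    have := key 0
    rw [opEq_card n hn 0, ← hU, h0]
    have e1 : n + 1 = n + 0 + 1 := by omega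
    have e2 : n + 0 = n := by omega
    rw [e1, this, e2]
  | succ k =>
    have hsplit : U.filter (fun a => flaws n a ≤ k + 1)
        = U.filter (fun a => flaws n a ≤ k) ∪ U.filter (fun a => flaws n a = k + 1) := by
      ext a
      simp only [Finset.mem_filter, Finset.mem_union]
      constructor
      · rintro ⟨ha, hf⟩
        by_cases h : flaws n a ≤ k
        · exact Or.inl ⟨ha, h⟩
        · exact Or.inr ⟨ha, by omega⟩
      · rintro (⟨ha, hf⟩ | ⟨ha, hf⟩) <;> exact ⟨ha, by omega⟩
    have hdisj : Disjoint (U.filter (fun a => flaws n a ≤ k))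
        (U.filter (fun a => flaws n a = k + 1)) := by
      rw [Finset.disjoint_left]
      intro a ha ha'
      simp only [Finset.mem_filter] at ha ha'
      omega
    have hcard : (U.filter (fun a => flaws n a ≤ k + 1)).card
        = (U.filter (fun a => flaws n a ≤ k)).card
          + (U.filter (fun a => flaws n a = k + 1)).card := by
      rw [hsplit, Finset.card_union_of_disjoint hdisj]
    have h1 := key k
    have h2 := key (k+1)
    rw [opEq_card n hn (k+1), ← hU]
    have e1 : n + (k + 1) = n + k + 1 := by omega
    have e2 : n + (k + 1 + 1) = n + (k+1) + 1 := by omega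
    rw [e1, e2]
    omega

lemma sum_upper_half (m : ℕ) :
    ∑ j ∈ Finset.range (m+1), (2*m+1).choose (m+1+j) = 4^m := by
  rw [← Nat.sum_range_choose_halfway m]
  rw [← Finset.sum_range_reflect (fun j => (2*m+1).choose (m+1+j)) (m+1)]
  apply Finset.sum_congr rfl
  intro j hj
  rw [Finset.mem_range] at hj
  have e1 : m + 1 + (m + 1 - 1 - j) = 2*m+1 - j := by omega
  rw [e1]
  exact Nat.choose_symm (by omega)

lemma sum_mid_half (m : ℕ) :
    2 * (∑ j ∈ Finset.range (m+1), (2*m).choose (m+j)) = 4^m + (2*m).choose m := by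
  have htot : ∑ i ∈ Finset.range (2*m+1), (2*m).choose i = 4^m := by
    have h4 : (4:ℕ)^m = 2^(2*m) := by rw [pow_mul]; norm_num
    rw [h4, ← Nat.sum_range_choose (2*m)]
  have hsplit : ∑ i ∈ Finset.range (m + (m+1)), (2*m).choose i
      = ∑ i ∈ Finset.range m, (2*m).choose i
        + ∑ j ∈ Finset.range (m+1), (2*m).choose (m+j) :=
    Finset.sum_range_add _ m (m+1)
  have hA : ∑ i ∈ Finset.range m, (2*m).choose i
      = ∑ j ∈ Finset.range m, (2*m).choose (m+1+j) := by
    rw [← Finset.sum_range_reflect (fun j => (2*m).choose (m+1+j)) m]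
    apply Finset.sum_congr rfl
    intro j hj
    rw [Finset.mem_range] at hj
    have e1 : m + 1 + (m - 1 - j) = 2*m - j := by omega
    rw [e1]
    exact (Nat.choose_symm (by omega)).symm
  have hQ : ∑ j ∈ Finset.range (m+1), (2*m).choose (m+j)
      = ∑ j ∈ Finset.range m, (2*m).choose (m+1+j) + (2*m).choose m := by
    rw [Finset.sum_range_succ' (fun j => (2*m).choose (m+j)) m]
    congr 1
    apply Finset.sum_congr rfl
    intro j _
    have e : m + (j+1) = m+1+j := by omega
    rw [e]
  have e2 : m + (m+1) = 2*m+1 := by omega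
  rw [e2] at hsplit
  omega

lemma sum_weighted (m : ℕ) :
    ∑ j ∈ Finset.range (m+1), (m+1+j) * (2*m+1).choose (m+1+j)
      = (2*m+1) * ∑ j ∈ Finset.range (m+1), (2*m).choose (m+j) := by
  rw [Finset.mul_sum]
  apply Finset.sum_congr rfl
  intro j _
  have := Nat.add_one_mul_choose_eq (2*m) (m+j)
  have e1 : (2*m).succ = 2*m+1 := rfl
  have e2 : (m+j).succ = m+j+1 := rfl
  have e3 : m + 1 + j = m + j + 1 := by omega
  rw [e3, this]
  ring

lemma central_rec (m : ℕ) :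
    (m+1) * ((2*(m+1)).choose (m+1)) = 2 * (2*m+1) * ((2*m).choose m) := by
  have := Nat.succ_mul_centralBinom_succ m
  rw [Nat.centralBinom, Nat.centralBinom] at this
  exact this

lemma central_two (m : ℕ) :
    (2*(m+1)).choose (m+1) = 2 * (2*m+1).choose (m+1) := by
  have e1 : 2*(m+1) = (2*m+1) + 1 := by omega
  rw [e1, Nat.choose_succ_succ (2*m+1) m]
  have hsymm : (2*m+1).choose m = (2*m+1).choose (m+1) := by
    have : 2*m+1 - (m+1) = m := by omega
    calc (2*m+1).choose m = (2*m+1).choose (2*m+1 - (m+1)) := by rw [this]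
      _ = (2*m+1).choose (m+1) := Nat.choose_symm (by omega)
  simp only [Nat.succ_eq_add_one] at *
  omega

lemma opEq_cast (m k : ℕ) : (opEq (m+1) k : ℤ)
    = ((2*m+1).choose (m+1+k) : ℤ) - ((2*m+1).choose (m+1+(k+1)) : ℤ) := by
  have h := opEq_add_choose (m+1) (by omega) k
  have e : m+1+(m+1)-1 = 2*m+1 := by omega
  rw [e] at h
  have h' : ((opEq (m+1) k : ℤ) + ((2*m+1).choose (m+1+(k+1)) : ℤ))
      = ((2*m+1).choose (m+1+k) : ℤ) := by exact_mod_cast h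
  linarith

section sums
variable (m : ℕ)

private noncomputable def ff (m : ℕ) : ℕ → ℤ := fun j => ((2*m+1).choose (m+1+j) : ℤ)

lemma ff_top : ff m (m+1) = 0 := by
  have : (2*m+1).choose (m+1+(m+1)) = 0 := Nat.choose_eq_zero_of_lt (by omega)
  simp [ff, this]

lemma ff_sum : ∑ j ∈ Finset.range (m+1), ff m j = 4^m := by
  have := sum_upper_half m
  simp only [ff]
  exact_mod_cast this

lemma ff_shift_sum : ∑ k ∈ Finset.range (m+1), ff m (k+1) = 4^m - ff m 0 := by
  have h1 := Finset.sum_range_succ' (ff m) (m+1)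
  have h2 := Finset.sum_range_succ (ff m) (m+1)
  have h3 := ff_sum m
  have h4 := ff_top m
  linarith [h1, h2]

lemma opEq_cast' (k : ℕ) : (opEq (m+1) k : ℤ) = ff m k - ff m (k+1) := opEq_cast m k

lemma sum0_z : (∑ k ∈ Finset.range (m+1), (opEq (m+1) k : ℤ)) = ff m 0 := by
  rw [Finset.sum_congr rfl (fun k _ => opEq_cast' m k),
    Finset.sum_range_sub' (ff m) (m+1), ff_top m]
  ring

lemma sum1_z : (∑ k ∈ Finset.range (m+1), (k : ℤ) * (opEq (m+1) k : ℤ))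
    = 4^m - ff m 0 := by
  have step : ∀ k ∈ Finset.range (m+1), (k:ℤ) * (opEq (m+1) k : ℤ)
      = ((fun (j:ℕ) => (j:ℤ) * ff m j) k - (fun (j:ℕ) => (j:ℤ) * ff m j) (k+1)) + ff m (k+1) := by
    intro k _
    rw [opEq_cast' m k]
    push_cast
    ring
  rw [Finset.sum_congr rfl step, Finset.sum_add_distrib,
    Finset.sum_range_sub' (fun (j:ℕ) => (j:ℤ) * ff m j) (m+1), ff_shift_sum m, ff_top m]
  push_cast
  ring

lemma kk_cast (k : ℕ) : ((k*(k-1) : ℕ) : ℤ) = (k:ℤ) * (k:ℤ) - (k:ℤ) := by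
  cases k with
  | zero => simp
  | succ k => push_cast [Nat.succ_sub_one]; ring

lemma sum2_z : (∑ k ∈ Finset.range (m+1), ((k*(k-1) : ℕ) : ℤ) * (opEq (m+1) k : ℤ))
    = 2 * (∑ k ∈ Finset.range (m+1), (k : ℤ) * ff m (k+1)) := by
  have step : ∀ k ∈ Finset.range (m+1), ((k*(k-1) : ℕ) : ℤ) * (opEq (m+1) k : ℤ)
      = ((fun (j:ℕ) => ((j:ℤ)*(j:ℤ) - (j:ℤ)) * ff m j) k
          - (fun (j:ℕ) => ((j:ℤ)*(j:ℤ) - (j:ℤ)) * ff m j) (k+1))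
        + 2 * ((k:ℤ) * ff m (k+1)) := by
    intro k _
    rw [opEq_cast' m k, kk_cast k]
    push_cast
    ring
  rw [Finset.sum_congr rfl step, Finset.sum_add_distrib,
    Finset.sum_range_sub' (fun (j:ℕ) => ((j:ℤ)*(j:ℤ) - (j:ℤ)) * ff m j) (m+1), ff_top m,
    ← Finset.mul_sum]
  push_cast
  ring

lemma sum_kf_shift : ∑ k ∈ Finset.range (m+1), (k : ℤ) * ff m (k+1)
    = (∑ j ∈ Finset.range (m+1), ((j:ℤ) - 1) * ff m j) + ff m 0 := by
  have h1 := Finset.sum_range_succ' (fun (j:ℕ) => ((j:ℤ) - 1) * ff m j) (m+1)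
  have h2 := Finset.sum_range_succ (fun (j:ℕ) => ((j:ℤ) - 1) * ff m j) (m+1)
  have h4 := ff_top m
  simp only [h4, mul_zero, zero_mul, add_zero] at h2
  have h3 : ∑ k ∈ Finset.range (m+1), ((fun (j:ℕ) => ((j:ℤ) - 1) * ff m j) (k+1))
      = ∑ k ∈ Finset.range (m+1), (k:ℤ) * ff m (k+1) := by
    apply Finset.sum_congr rfl
    intro k _
    push_cast
    ring
  rw [h3] at h1
  have : ((0:ℤ) - 1) * ff m 0 = - ff m 0 := by ring
  simp only [Nat.cast_zero] at h1
  linarith [h1, h2]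

lemma sum_jf : ∑ j ∈ Finset.range (m+1), (j : ℤ) * ff m j
    = (2*m+1) * (∑ j ∈ Finset.range (m+1), ((2*m).choose (m+j) : ℤ))
      - (m+1) * 4^m := by
  have hw := sum_weighted m
  have hwz : (∑ j ∈ Finset.range (m+1), (((m+1+j) * (2*m+1).choose (m+1+j) : ℕ) : ℤ))
      = ((2*m+1 : ℕ) : ℤ) * ∑ j ∈ Finset.range (m+1), (((2*m).choose (m+j) : ℕ) : ℤ) := by
    exact_mod_cast hw
  have hterm : ∀ j ∈ Finset.range (m+1), (((m+1+j) * (2*m+1).choose (m+1+j) : ℕ) : ℤ)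
      = ((m:ℤ)+1+(j:ℤ)) * ff m j := by
    intro j _
    simp only [ff]
    push_cast
    ring
  rw [Finset.sum_congr rfl hterm] at hwz
  have hexp : ∑ j ∈ Finset.range (m+1), ((m:ℤ)+1+(j:ℤ)) * ff m j
      = ∑ j ∈ Finset.range (m+1), (j:ℤ) * ff m j
        + ((m:ℤ)+1) * ∑ j ∈ Finset.range (m+1), ff m j := by
    rw [Finset.mul_sum, ← Finset.sum_add_distrib]
    apply Finset.sum_congr rfl
    intro j _
    ring
  rw [ff_sum m] at hexp
  rw [hexp] at hwz
  push_cast at hwz ⊢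
  linarith [hwz]

end sums

lemma N3 (m : ℕ) : 2 * ∑ k ∈ Finset.range (m+1), opEq (m+1) k
    = (2*(m+1)).choose (m+1) := by
  have hz := sum0_z m
  have hff0 : ff m 0 = ((2*m+1).choose (m+1) : ℤ) := rfl
  have h2 : (((2*(m+1)).choose (m+1) : ℕ) : ℤ) = 2 * ((2*m+1).choose (m+1) : ℤ) := by
    exact_mod_cast central_two m
  have hgz : ((2 * ∑ k ∈ Finset.range (m+1), opEq (m+1) k : ℕ) : ℤ)
      = (((2*(m+1)).choose (m+1) : ℕ) : ℤ) := by
    push_cast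
    rw [hz]
    push_cast at h2
    linarith [h2, hff0]
  exact_mod_cast hgz

lemma pow_fact (m : ℕ) : ((2:ℤ))^(2*(m+1)-1) = 2 * 4^m := by
  have e : 2*(m+1)-1 = 2*m+1 := by omega
  have h4 : (4:ℤ)^m = 2^(2*m) := by rw [pow_mul]; norm_num
  rw [e, pow_succ, h4]
  ring

lemma N4 (m : ℕ) : 2 * ∑ k ∈ Finset.range (m+1), k * opEq (m+1) k
    + (2*(m+1)).choose (m+1) = 2^(2*(m+1)-1) := by
  have hz := sum1_z m
  have hff0 : ff m 0 = ((2*m+1).choose (m+1) : ℤ) := rfl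
  have h2 : (((2*(m+1)).choose (m+1) : ℕ) : ℤ) = 2 * ((2*m+1).choose (m+1) : ℤ) := by
    exact_mod_cast central_two m
  have hgz : ((2 * ∑ k ∈ Finset.range (m+1), k * opEq (m+1) k
      + (2*(m+1)).choose (m+1) : ℕ) : ℤ) = ((2^(2*(m+1)-1) : ℕ) : ℤ) := by
    push_cast
    rw [hz]
    push_cast at h2
    linarith [h2, hff0, pow_fact m]
  exact_mod_cast hgz

lemma N5 (m : ℕ) : 2 * ∑ k ∈ Finset.range (m+1), k * (k-1) * opEq (m+1) k
    + 3 * 2^(2*(m+1)-1) = (m+1+2) * ((2*(m+1)).choose (m+1)) := by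
  have hcastsum : ((∑ k ∈ Finset.range (m+1), k * (k-1) * opEq (m+1) k : ℕ) : ℤ)
      = ∑ k ∈ Finset.range (m+1), ((k*(k-1) : ℕ) : ℤ) * (opEq (m+1) k : ℤ) := by
    rw [Nat.cast_sum]
    apply Finset.sum_congr rfl
    intro k _
    push_cast
    ring
  have h1 := sum2_z m
  have h2 := sum_kf_shift m
  have h3 : ∑ j ∈ Finset.range (m+1), ((j:ℤ) - 1) * ff m j
      = ∑ j ∈ Finset.range (m+1), (j:ℤ) * ff m j - ∑ j ∈ Finset.range (m+1), ff m j := by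
    rw [← Finset.sum_sub_distrib]
    apply Finset.sum_congr rfl
    intro j _
    ring
  have h4 := sum_jf m
  have h5 := ff_sum m
  -- abbreviations
  set Q : ℤ := ∑ j ∈ Finset.range (m+1), (((2*m).choose (m+j) : ℕ) : ℤ) with hQdef
  have h2Q : 2 * Q = 4^m + ((2*m).choose m : ℤ) := by
    rw [hQdef, ← Nat.cast_sum, ← Nat.cast_ofNat, ← Nat.cast_mul]
    exact_mod_cast sum_mid_half m
  have hrec : ((m:ℤ)+1) * (((2*(m+1)).choose (m+1) : ℕ) : ℤ)
      = 2 * (2*(m:ℤ)+1) * ((2*m).choose m : ℤ) := by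
    exact_mod_cast central_rec m
  have hC : (((2*(m+1)).choose (m+1) : ℕ) : ℤ) = 2 * ff m 0 := by
    have hff0 : ff m 0 = ((2*m+1).choose (m+1) : ℤ) := rfl
    rw [hff0]
    exact_mod_cast central_two m
  have hS2 : ((∑ k ∈ Finset.range (m+1), k * (k-1) * opEq (m+1) k : ℕ) : ℤ)
      = 2 * ((2*(m:ℤ)+1) * Q - ((m:ℤ)+1) * 4^m - 4^m + ff m 0) := by
    rw [hcastsum, h1, h2, h3, h4, h5]
    try push_cast
    try ring
  have hgz : ((2 * ∑ k ∈ Finset.range (m+1), k * (k-1) * opEq (m+1) k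
      + 3 * 2^(2*(m+1)-1) : ℕ) : ℤ)
      = (((m+1+2) * ((2*(m+1)).choose (m+1)) : ℕ) : ℤ) := by
    have hp : ((2:ℤ))^(2*(m+1)-1) = 2 * 4^m := pow_fact m
    push_cast
    push_cast at hS2 h2Q hrec hC
    linear_combination 2*hS2 + 2*(2*(m:ℤ)+1)*h2Q - hrec - 2*hC + 3*hp
  exact_mod_cast hgz


theorem stmt19 (n : ℕ) (hn : 1 ≤ n) :
    ((∑ k ∈ Finset.range n, (k : ℚ) * (opEq n k : ℚ)) /
        (∑ k ∈ Finset.range n, (opEq n k : ℚ))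
      = 2 ^ (2 * n - 1) / ((2 * n).choose n : ℚ) - 1) ∧
    ((∑ k ∈ Finset.range n, (k : ℚ) ^ 2 * (opEq n k : ℚ)) /
        (∑ k ∈ Finset.range n, (opEq n k : ℚ))
      - ((∑ k ∈ Finset.range n, (k : ℚ) * (opEq n k : ℚ)) /
          (∑ k ∈ Finset.range n, (opEq n k : ℚ))) ^ 2
      = (n : ℚ) - (2 ^ (2 * n - 1) / ((2 * n).choose n : ℚ)) ^ 2) ∧
    (2 * ∑ k ∈ Finset.range n, opEq n k = (2 * n).choose n) ∧
    (2 * ∑ k ∈ Finset.range n, k * opEq n k = 2 ^ (2 * n - 1) - (2 * n).choose n) ∧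
    (2 * ∑ k ∈ Finset.range n, k * (k - 1) * opEq n k
      = (n + 2) * (2 * n).choose n - 3 * 2 ^ (2 * n - 1)) := by
  obtain ⟨m, rfl⟩ : ∃ m, n = m + 1 := ⟨n - 1, by omega⟩
  have n3 := N3 m
  have n4 := N4 m
  have n5 := N5 m
  have g4 : 2 * ∑ k ∈ Finset.range (m+1), k * opEq (m+1) k
      = 2^(2*(m+1)-1) - (2*(m+1)).choose (m+1) := eq_tsub_of_add_eq n4
  have g5 : 2 * ∑ k ∈ Finset.range (m+1), k * (k-1) * opEq (m+1) k
      = (m+1+2) * ((2*(m+1)).choose (m+1)) - 3 * 2^(2*(m+1)-1) := eq_tsub_of_add_eq n5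
  -- rational versions
  have hb : (((2*(m+1)).choose (m+1) : ℕ) : ℚ) ≠ 0 := by
    have := Nat.choose_pos (show m+1 ≤ 2*(m+1) by omega)
    exact_mod_cast this.ne'
  have q3 : 2 * (∑ k ∈ Finset.range (m+1), (opEq (m+1) k : ℚ))
      = (((2*(m+1)).choose (m+1) : ℕ) : ℚ) := by exact_mod_cast n3
  have q4 : 2 * (∑ k ∈ Finset.range (m+1), (k:ℚ) * (opEq (m+1) k : ℚ))
      + (((2*(m+1)).choose (m+1) : ℕ) : ℚ) = (2:ℚ)^(2*(m+1)-1) := by exact_mod_cast n4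
  have hsumcast : ((∑ k ∈ Finset.range (m+1), k * (k-1) * opEq (m+1) k : ℕ) : ℚ)
      = ∑ k ∈ Finset.range (m+1), ((k * (k-1) : ℕ) : ℚ) * (opEq (m+1) k : ℚ) := by
    rw [Nat.cast_sum]
    exact Finset.sum_congr rfl (fun k _ => by push_cast; ring)
  have q5 : 2 * (∑ k ∈ Finset.range (m+1), ((k*(k-1):ℕ):ℚ) * (opEq (m+1) k : ℚ))
      + 3 * (2:ℚ)^(2*(m+1)-1) = ((m:ℚ) + 1 + 2) * (((2*(m+1)).choose (m+1) : ℕ) : ℚ) := by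
    rw [← hsumcast]
    have := n5
    have h' : ((2 * ∑ k ∈ Finset.range (m+1), k * (k-1) * opEq (m+1) k
        + 3 * 2^(2*(m+1)-1) : ℕ) : ℚ)
        = (((m+1+2) * ((2*(m+1)).choose (m+1)) : ℕ) : ℚ) := by exact_mod_cast this
    push_cast at h' ⊢
    linarith [h']
  have hsq : ∑ k ∈ Finset.range (m+1), (k:ℚ)^2 * (opEq (m+1) k : ℚ)
      = ∑ k ∈ Finset.range (m+1), ((k*(k-1):ℕ):ℚ) * (opEq (m+1) k : ℚ)
        + ∑ k ∈ Finset.range (m+1), (k:ℚ) * (opEq (m+1) k : ℚ) := by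
    rw [← Finset.sum_add_distrib]
    apply Finset.sum_congr rfl
    intro k _
    have hkk : ((k*(k-1) : ℕ) : ℚ) = (k:ℚ)^2 - k := by
      cases k with
      | zero => simp
      | succ k => push_cast [Nat.succ_sub_one]; ring
    rw [hkk]; ring
  have hS0 : ∑ k ∈ Finset.range (m+1), (opEq (m+1) k : ℚ)
      = (((2*(m+1)).choose (m+1) : ℕ) : ℚ) / 2 := by linarith
  have hS1 : ∑ k ∈ Finset.range (m+1), (k:ℚ) * (opEq (m+1) k : ℚ)
      = ((2:ℚ)^(2*(m+1)-1) - (((2*(m+1)).choose (m+1) : ℕ) : ℚ)) / 2 := by linarith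
  have hS2 : ∑ k ∈ Finset.range (m+1), ((k*(k-1):ℕ):ℚ) * (opEq (m+1) k : ℚ)
      = (((m:ℚ) + 1 + 2) * (((2*(m+1)).choose (m+1) : ℕ) : ℚ)
        - 3 * (2:ℚ)^(2*(m+1)-1)) / 2 := by linarith
  refine ⟨?_, ?_, n3, g4, g5⟩
  · rw [hS1, hS0]
    field_simp
    try ring
  · rw [hsq, hS2, hS1, hS0]
    push_cast
    field_simp
    try ring
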